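/- Let n be squarefree with ω(n) = k, P = Π_{p|n}(1 − 1/p), and for odd s ≥ 1 let T'_s = Σ_{r=s+1}^{k} (−1)^r Σ_{d|n, ω(d)=r} 1/d. If P > T'_s and Q is a positive integer with k^s/(P − T'_s) < Q, then g(n) ≤ Q (Stevens' criterion). -/

import Mathlib

open Finset

-- count of multiples of d among m+1..m+Q
lemma count_multiples (m : ℤ) (Q d : ℕ) (hd : 0 < d) :
    (((Finset.Icc 1 Q).filter (fun i : ℕ => (d:ℤ) ∣ (m + (i:ℤ)))).card : ℤ)
      = ((m + Q) / d - m / d) := by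
  have hd' : (0:ℤ) < (d:ℤ) := by exact_mod_cast hd
  have hcard : ((Finset.Icc 1 Q).filter (fun i : ℕ => (d:ℤ) ∣ (m + (i:ℤ)))).card
      = (Finset.Ioc (m / d) ((m + Q) / d)).card := by
    apply Finset.card_bij' (fun i _ => (m + (i:ℕ)) / (d:ℤ))
      (fun b _ => (b * d - m).toNat)
    · rintro i hi
      simp only [Finset.mem_filter, Finset.mem_Icc] at hi
      obtain ⟨⟨h1, h2⟩, hdvd⟩ := hi
      rw [Finset.mem_Ioc]
      constructor
      · rw [Int.ediv_lt_iff_lt_mul hd', Int.ediv_mul_cancel hdvd]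
        have : (1:ℤ) ≤ i := by exact_mod_cast h1
        linarith
      · exact Int.ediv_le_ediv hd' (by exact_mod_cast (by linarith [show (i:ℤ) ≤ Q from by exact_mod_cast h2] : m + (i:ℤ) ≤ m + Q))
    · rintro b hb
      rw [Finset.mem_Ioc] at hb
      obtain ⟨h1, h2⟩ := hb
      have hlb : m < b * d := by rwa [Int.ediv_lt_iff_lt_mul hd'] at h1
      have hub : b * d ≤ m + Q := by rwa [Int.le_ediv_iff_mul_le hd'] at h2
      have hge : (1:ℤ) ≤ b * d - m := by linarith
      have hle : b * d - m ≤ Q := by linarith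
      simp only [Finset.mem_filter, Finset.mem_Icc]
      refine ⟨⟨?_, ?_⟩, ?_⟩
      · omega
      · omega
      · have : ((b * d - m).toNat : ℤ) = b * d - m := Int.toNat_of_nonneg (by linarith)
        rw [this]
        have : m + (b * d - m) = b * d := by ring
        rw [this]
        exact Dvd.intro_left b rfl
    · rintro i hi
      simp only [Finset.mem_filter, Finset.mem_Icc] at hi
      obtain ⟨⟨h1, h2⟩, hdvd⟩ := hi
      rw [Int.ediv_mul_cancel hdvd]
      omega
    · rintro b hb
      rw [Finset.mem_Ioc] at hb
      obtain ⟨h1, h2⟩ := hb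
      have hlb : m < b * d := by rwa [Int.ediv_lt_iff_lt_mul hd'] at h1
      have : ((b * d - m).toNat : ℤ) = b * d - m := Int.toNat_of_nonneg (by linarith)
      rw [this, show m + (b * d - m) = b * d by ring, Int.mul_ediv_cancel _ (by positivity)]
  rw [hcard, Int.card_Ioc]
  exact Int.toNat_of_nonneg (by
    have := Int.ediv_le_ediv hd' (show m ≤ m + Q by simp)
    linarith)

lemma abs_count_sub_le (m : ℤ) (Q d : ℕ) (hd : 0 < d) :
    |(((Finset.Icc 1 Q).filter (fun i : ℕ => (d:ℤ) ∣ (m + (i:ℤ)))).card : ℝ) - (Q:ℝ)/d| ≤ 1 := by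
  have hd' : (0:ℤ) < (d:ℤ) := by exact_mod_cast hd
  have hdr : (0:ℝ) < (d:ℝ) := by exact_mod_cast hd
  have hcard := count_multiples m Q d hd
  -- ediv bounds
  have key : ∀ a : ℤ, (d:ℤ) * (a / d) ≤ a ∧ a < (d:ℤ) * (a / d) + d := by
    intro a
    constructor
    · conv_rhs => rw [← Int.mul_ediv_add_emod a d]
      have := Int.emod_nonneg a (show (d:ℤ) ≠ 0 by omega)
      linarith
    · conv_lhs => rw [← Int.mul_ediv_add_emod a d]
      have := Int.emod_lt_of_pos a hd'
      linarith
  obtain ⟨h1, h2⟩ := key m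
  obtain ⟨h3, h4⟩ := key (m + Q)
  set D : ℤ := (m + Q) / d - m / d with hD
  have hzb : (d:ℤ) * D ≤ (Q:ℤ) + d ∧ (Q:ℤ) - d ≤ (d:ℤ) * D := by
    constructor <;> [nlinarith; nlinarith]
  have hcardD : (((Finset.Icc 1 Q).filter (fun i : ℕ => (d:ℤ) ∣ (m + (i:ℤ)))).card : ℝ) = (D:ℝ) := by
    exact_mod_cast congrArg (Int.cast : ℤ → ℝ) hcard
  rw [hcardD, abs_le]
  have hb1 : (d:ℝ) * D ≤ (Q:ℝ) + d := by exact_mod_cast hzb.1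
  have hb2 : (Q:ℝ) - d ≤ (d:ℝ) * D := by exact_mod_cast hzb.2
  constructor
  · have h5 : (Q:ℝ)/d ≤ (D:ℝ) + 1 := by rw [div_le_iff₀ hdr]; nlinarith
    linarith
  · have h5 : (D:ℝ) - 1 ≤ (Q:ℝ)/d := by rw [le_div_iff₀ hdr]; nlinarith
    linarith

lemma sum_divisors_powersetCard {n : ℕ} (hn : Squarefree n) (r : ℕ) (f : ℕ → ℝ) :
    ∑ d ∈ n.divisors.filter (fun d => d.primeFactors.card = r), f d
      = ∑ A ∈ n.primeFactors.powersetCard r, f (∏ p ∈ A, p) := by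
  have hn0 : n ≠ 0 := hn.ne_zero
  apply Finset.sum_nbij' (fun d => d.primeFactors) (fun A => ∏ p ∈ A, p)
  · intro d hd
    simp only [Finset.mem_filter, Nat.mem_divisors] at hd
    exact Finset.mem_powersetCard.2 ⟨Nat.primeFactors_mono hd.1.1 hn0, hd.2⟩
  · intro A hA
    obtain ⟨hsub, hcard⟩ := Finset.mem_powersetCard.1 hA
    have hp : ∀ p ∈ A, p.Prime := fun p hp => Nat.prime_of_mem_primeFactors (hsub hp)
    simp only [Finset.mem_filter, Nat.mem_divisors]
    refine ⟨⟨Finset.prod_primes_dvd n (fun p hp' => (hp p hp').prime)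
      (fun p hp' => Nat.dvd_of_mem_primeFactors (hsub hp')), hn0⟩, ?_⟩
    rw [Nat.primeFactors_prod hp, hcard]
  · intro d hd
    simp only [Finset.mem_filter, Nat.mem_divisors] at hd
    exact Nat.prod_primeFactors_of_squarefree ((Squarefree.squarefree_of_dvd hd.1.1 hn))
  · intro A hA
    obtain ⟨hsub, _⟩ := Finset.mem_powersetCard.1 hA
    exact Nat.primeFactors_prod (fun p hp => Nat.prime_of_mem_primeFactors (hsub hp))
  · intro d hd
    simp only [Finset.mem_filter, Nat.mem_divisors] at hd
    rw [Nat.prod_primeFactors_of_squarefree ((Squarefree.squarefree_of_dvd hd.1.1 hn))]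

lemma card_divisors_dvd {n : ℕ} (hn : Squarefree n) (r : ℕ) (y : ℕ) :
    (n.divisors.filter (fun d => d.primeFactors.card = r ∧ d ∣ y)).card
      = Nat.choose ((n.primeFactors.filter (fun p => p ∣ y)).card) r := by
  have hn0 : n ≠ 0 := hn.ne_zero
  rw [← Finset.card_powersetCard]
  apply Finset.card_nbij' (fun d => d.primeFactors) (fun A => ∏ p ∈ A, p)
  · intro d hd
    simp only [Finset.mem_coe, Finset.mem_filter, Nat.mem_divisors] at hd
    obtain ⟨⟨hdn, _⟩, hr, hdy⟩ := hd
    refine Finset.mem_powersetCard.2 ⟨?_, hr⟩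
    intro p hp
    exact Finset.mem_filter.2 ⟨Nat.primeFactors_mono hdn hn0 hp,
      (Nat.dvd_of_mem_primeFactors hp).trans hdy⟩
  · intro A hA
    obtain ⟨hsub, hcard⟩ := Finset.mem_powersetCard.1 hA
    have hsub' : A ⊆ n.primeFactors := hsub.trans (Finset.filter_subset _ _)
    have hp : ∀ p ∈ A, p.Prime := fun p hp => Nat.prime_of_mem_primeFactors (hsub' hp)
    simp only [Finset.mem_coe, Finset.mem_filter, Nat.mem_divisors]
    refine ⟨⟨Finset.prod_primes_dvd n (fun p hp' => (hp p hp').prime)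
      (fun p hp' => Nat.dvd_of_mem_primeFactors (hsub' hp')), hn0⟩, ?_, ?_⟩
    · rw [Nat.primeFactors_prod hp, hcard]
    · exact Finset.prod_primes_dvd y (fun p hp' => (hp p hp').prime)
        (fun p hp' => (Finset.mem_filter.1 (hsub hp')).2)
  · intro d hd
    simp only [Finset.mem_coe, Finset.mem_filter, Nat.mem_divisors] at hd
    exact Nat.prod_primeFactors_of_squarefree ((Squarefree.squarefree_of_dvd hd.1.1 hn))
  · intro A hA
    obtain ⟨hsub, _⟩ := Finset.mem_powersetCard.1 hA
    have hsub' : A ⊆ n.primeFactors := hsub.trans (Finset.filter_subset _ _)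
    exact Nat.primeFactors_prod (fun p hp => Nat.prime_of_mem_primeFactors (hsub' hp))

lemma alt_choose_sum (t s : ℕ) (ht : 1 ≤ t) :
    ∑ r ∈ Finset.range (s+1), (-1:ℝ)^r * (Nat.choose t r : ℝ)
      = (-1:ℝ)^s * (Nat.choose (t-1) s : ℝ) := by
  induction s with
  | zero => simp
  | succ s ih =>
    rw [Finset.sum_range_succ, ih]
    have hch : Nat.choose t (s+1) = Nat.choose (t-1) s + Nat.choose (t-1) (s+1) := by
      obtain ⟨t, rfl⟩ : ∃ t', t = t' + 1 := ⟨t - 1, by omega⟩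
      simp [Nat.choose_succ_succ]
    rw [hch]
    push_cast
    rw [pow_succ]
    ring

lemma choose_sum_le (k : ℕ) : ∀ s : ℕ, 1 ≤ s → ∑ r ∈ Finset.Icc 1 s, Nat.choose k r ≤ k^s := by
  intro s
  induction s with
  | zero => omega
  | succ s ih =>
    intro _
    rcases Nat.eq_zero_or_pos s with rfl | hs
    · simp
    · rw [Finset.sum_Icc_succ_top (by omega)]
      have h1 : Nat.choose k (s+1) ≤ Nat.choose k s * (k - 1) := by
        calc Nat.choose k (s+1) ≤ Nat.choose k (s+1) * (s+1) := Nat.le_mul_of_pos_right _ (by omega)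
        _ = Nat.choose k s * (k - s) := Nat.choose_succ_right_eq k s
        _ ≤ Nat.choose k s * (k - 1) := Nat.mul_le_mul_left _ (Nat.sub_le_sub_left hs k)
      have h2 : Nat.choose k s * (k-1) ≤ k^s * (k-1) := Nat.mul_le_mul_right _ (Nat.choose_le_pow k s)
      have h3 : k^s + k^s * (k-1) ≤ k^(s+1) := by
        cases k with
        | zero => simp [Nat.zero_pow (show 0 < s by omega)]
        | succ k => simp only [Nat.succ_sub_one, pow_succ]; ring_nf; omega
      calc ∑ r ∈ Finset.Icc 1 s, Nat.choose k r + Nat.choose k (s+1)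
          ≤ k^s + k^s * (k-1) := Nat.add_le_add (ih hs) (h1.trans h2)
        _ ≤ k^(s+1) := h3





lemma pointwise_bonferroni (hn : Squarefree n) {s : ℕ} (hs : Odd s) (y : ℕ) :
    ∑ r ∈ Finset.range (s+1), (-1:ℝ)^r *
      ((n.divisors.filter (fun d => d.primeFactors.card = r ∧ d ∣ y)).card : ℝ)
      ≤ if Nat.Coprime y n then 1 else 0 := by
  have hc : ∀ r, ((n.divisors.filter (fun d => d.primeFactors.card = r ∧ d ∣ y)).card : ℝ)
      = (Nat.choose ((n.primeFactors.filter (fun p => p ∣ y)).card) r : ℝ) := fun r => by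
    rw [card_divisors_dvd hn r y]
  simp only [hc]
  set t := (n.primeFactors.filter (fun p => p ∣ y)).card with hts
  rcases Nat.eq_zero_or_pos t with h0 | h1
  · have hcop : Nat.Coprime y n := by
      by_contra hc'
      obtain ⟨p, pp, py, pn⟩ := Nat.Prime.not_coprime_iff_dvd.1 hc'
      have hp : p ∈ n.primeFactors.filter (fun p => p ∣ y) :=
        Finset.mem_filter.2 ⟨Nat.mem_primeFactors.2 ⟨pp, pn, hn.ne_zero⟩, py⟩
      have := Finset.card_pos.2 ⟨p, hp⟩
      omega
    rw [if_pos hcop, h0]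
    rw [Finset.sum_eq_single 0]
    · simp
    · intro r _ hr
      obtain ⟨r, rfl⟩ : ∃ r', r = r' + 1 := ⟨r - 1, by omega⟩
      simp
    · simp
  · rw [alt_choose_sum t s h1, Odd.neg_one_pow hs]
    have h2 : (0:ℝ) ≤ (Nat.choose (t-1) s : ℝ) := by positivity
    split <;> nlinarith


lemma prod_one_sub_eq {n : ℕ} (hn : Squarefree n) :
    ∏ p ∈ n.primeFactors, (1 - 1/(p:ℝ))
      = ∑ r ∈ Finset.range (n.primeFactors.card + 1), (-1:ℝ)^r *
          ∑ d ∈ n.divisors.filter (fun d => d.primeFactors.card = r), (1:ℝ)/d := by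
  have h1 : ∀ p ∈ n.primeFactors, (1 - 1/(p:ℝ)) = (-(1/(p:ℝ))) + 1 := fun p _ => by ring
  rw [Finset.prod_congr rfl h1, Finset.prod_add]
  simp only [Finset.prod_const_one, mul_one]
  rw [Finset.sum_powerset]
  apply Finset.sum_congr rfl
  intro r hr
  rw [sum_divisors_powersetCard hn r, Finset.mul_sum]
  apply Finset.sum_congr rfl
  intro A hA
  obtain ⟨hsub, hcard⟩ := Finset.mem_powersetCard.1 hA
  have hp0 : ∀ p ∈ A, (p:ℝ) ≠ 0 := fun p hp => by
    have := (Nat.prime_of_mem_primeFactors (hsub hp)).pos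
    positivity
  calc ∏ p ∈ A, -(1/(p:ℝ)) = ∏ p ∈ A, ((-1) * (1/(p:ℝ))) := by
        apply Finset.prod_congr rfl; intro p _; ring
    _ = (-1:ℝ)^r * ∏ p ∈ A, (1/(p:ℝ)) := by rw [Finset.prod_mul_distrib, Finset.prod_const, hcard]
    _ = (-1:ℝ)^r * (1/((∏ p ∈ A, p : ℕ):ℝ)) := by
        congr 1
        rw [Nat.cast_prod]
        simp [one_div, ← Finset.prod_inv_distrib]

noncomputable def jacobsthal (n : ℕ) : ℕ :=
  sInf {Q : ℕ | 0 < Q ∧ ∀ m : ℤ, ∃ i : ℕ, 1 ≤ i ∧ i ≤ Q ∧ IsCoprime (m + i) (n : ℤ)}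








theorem stevens_criterion (n k : ℕ) (hn : Squarefree n) (hk : n.primeFactors.card = k)
    (s : ℕ) (hs : Odd s) (hs1 : 1 ≤ s)
    (P T' : ℝ)
    (hP : P = ∏ p ∈ n.primeFactors, (1 - 1 / (p : ℝ)))
    (hT : T' = ∑ r ∈ Finset.Icc (s + 1) k,
      (-1 : ℝ) ^ r * ∑ d ∈ n.divisors.filter (fun d => d.primeFactors.card = r), (1 : ℝ) / d)
    (hPT : T' < P) (Q : ℕ) (hQ : 0 < Q) (hlt : (k : ℝ) ^ s / (P - T') < Q) :
    jacobsthal n ≤ Q := by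
  have hn0 : n ≠ 0 := hn.ne_zero
  have hPpos : (0:ℝ) < P - T' := by linarith
  have hQbig : (k:ℝ)^s < (Q:ℝ) * (P - T') := by
    rw [div_lt_iff₀ hPpos] at hlt; linarith
  apply Nat.sInf_le
  refine ⟨hQ, ?_⟩
  intro m
  by_contra hcon
  push_neg at hcon
  -- notation
  set D : ℕ → Finset ℕ := fun r => n.divisors.filter (fun d => d.primeFactors.card = r) with hD
  set A : ℕ → ℝ := fun d => (((Finset.Icc 1 Q).filter (fun i : ℕ => (d:ℤ) ∣ (m + (i:ℤ)))).card : ℝ)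
    with hA
  set f : ℕ → ℝ := fun r => (-1:ℝ)^r * ∑ d ∈ D r, (1:ℝ)/d with hf
  -- coprimality transfer
  have hcop_iff : ∀ x : ℤ, Nat.Coprime x.natAbs n ↔ IsCoprime x (n:ℤ) := by
    intro x
    rw [Int.isCoprime_iff_gcd_eq_one]
    simp [Int.gcd, Nat.Coprime]
  -- N = 0
  have hN0 : ∑ i ∈ Finset.Icc 1 Q, (if Nat.Coprime (m + (i:ℤ)).natAbs n then (1:ℝ) else 0) = 0 := by
    apply Finset.sum_eq_zero
    intro i hi
    rw [Finset.mem_Icc] at hi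
    rw [if_neg]
    intro hcp
    exact hcon i hi.1 hi.2 ((hcop_iff _).1 hcp)
  -- dvd transfer
  have hdvd_iff : ∀ (d : ℕ) (x : ℤ), d ∣ x.natAbs ↔ (d:ℤ) ∣ x := by
    intro d x
    rw [← Int.natAbs_dvd_natAbs, Int.natAbs_natCast]
  -- swap: ∑_{d ∈ D r} A d = ∑_i card(...)
  have hswap : ∀ r, ∑ d ∈ D r, A d
      = ∑ i ∈ Finset.Icc 1 Q,
          ((n.divisors.filter (fun d => d.primeFactors.card = r ∧ d ∣ (m + (i:ℤ)).natAbs)).card : ℝ) := by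
    intro r
    have h1 : ∀ d, A d = ∑ i ∈ Finset.Icc 1 Q, (if (d:ℤ) ∣ (m + (i:ℤ)) then (1:ℝ) else 0) := by
      intro d
      rw [hA]
      rw [Finset.sum_boole]
    simp only [h1]
    rw [Finset.sum_comm]
    apply Finset.sum_congr rfl
    intro i _
    rw [hD]
    have : ∀ d : ℕ, (d.primeFactors.card = r ∧ d ∣ (m + (i:ℤ)).natAbs)
        ↔ (d.primeFactors.card = r ∧ (d:ℤ) ∣ (m + (i:ℤ))) := by
      intro d; rw [hdvd_iff]
    rw [Finset.filter_congr (fun d _ => this d)]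
    rw [Finset.sum_boole, Finset.filter_filter]
  -- step 1
  have step1 : ∑ r ∈ Finset.range (s+1), (-1:ℝ)^r * ∑ d ∈ D r, A d ≤ 0 := by
    calc ∑ r ∈ Finset.range (s+1), (-1:ℝ)^r * ∑ d ∈ D r, A d
        = ∑ i ∈ Finset.Icc 1 Q, ∑ r ∈ Finset.range (s+1), (-1:ℝ)^r *
            ((n.divisors.filter (fun d => d.primeFactors.card = r ∧ d ∣ (m + (i:ℤ)).natAbs)).card : ℝ) := by
          simp only [hswap, Finset.mul_sum]
          rw [Finset.sum_comm]
      _ ≤ ∑ i ∈ Finset.Icc 1 Q, (if Nat.Coprime (m + (i:ℤ)).natAbs n then (1:ℝ) else 0) :=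
          Finset.sum_le_sum (fun i _ => pointwise_bonferroni hn hs _)
      _ = 0 := hN0
  -- D 0 = {1} and A 1 = Q
  have hD0 : D 0 = {1} := by
    rw [hD]
    ext d
    simp only [Finset.mem_filter, Nat.mem_divisors, Finset.mem_singleton, Finset.card_eq_zero]
    constructor
    · rintro ⟨⟨hdn, _⟩, hpf⟩
      have hd0 : d ≠ 0 := by rintro rfl; exact hn0 (Nat.eq_zero_of_zero_dvd hdn)
      rcases Nat.primeFactors_eq_empty.1 hpf with h | h
      · exact absurd h hd0
      · exact h
    · rintro rfl
      exact ⟨⟨one_dvd n, hn0⟩, Nat.primeFactors_one⟩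
  have hA1 : A 1 = (Q:ℝ) := by
    rw [hA]
    simp [Nat.card_Icc]
  -- cards of D r
  have hcardD : ∀ r, ((D r).card : ℝ) = (Nat.choose k r : ℝ) := by
    intro r
    have h1 : ∑ d ∈ D r, (1:ℝ) = ∑ A' ∈ n.primeFactors.powersetCard r, (1:ℝ) :=
      sum_divisors_powersetCard hn r (fun _ => 1)
    simp only [Finset.sum_const, nsmul_eq_mul, mul_one] at h1
    rw [Finset.card_powersetCard, hk] at h1
    exact_mod_cast h1
  -- error bound per r
  have herr : ∀ r ∈ Finset.range (s+1),
      |∑ d ∈ D r, (A d - (Q:ℝ) * (1/d))| ≤ if r = 0 then 0 else ((D r).card : ℝ) := by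
    intro r _
    rcases Nat.eq_zero_or_pos r with rfl | hr
    · rw [if_pos rfl, hD0]
      simp [hA1]
    · rw [if_neg (by omega)]
      calc |∑ d ∈ D r, (A d - (Q:ℝ) * (1/d))| ≤ ∑ d ∈ D r, |A d - (Q:ℝ) * (1/d)| :=
            Finset.abs_sum_le_sum_abs _ _
        _ ≤ ∑ d ∈ D r, 1 := by
            apply Finset.sum_le_sum
            intro d hd
            rw [hD, Finset.mem_filter, Nat.mem_divisors] at hd
            have hd1 : 0 < d := Nat.pos_of_dvd_of_pos hd.1.1 (Nat.pos_of_ne_zero hn0)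
            have := abs_count_sub_le m Q d hd1
            rw [hA]
            rw [mul_one_div]
            exact this
        _ = ((D r).card : ℝ) := by simp
  -- step 2
  have step2 : (Q:ℝ) * (∑ r ∈ Finset.range (s+1), f r) - (k:ℝ)^s
      ≤ ∑ r ∈ Finset.range (s+1), (-1:ℝ)^r * ∑ d ∈ D r, A d := by
    have hsplit : ∀ r, (-1:ℝ)^r * ∑ d ∈ D r, A d
        = (Q:ℝ) * f r + (-1:ℝ)^r * ∑ d ∈ D r, (A d - (Q:ℝ) * (1/d)) := by
      intro r
      rw [hf]
      rw [Finset.sum_sub_distrib, ← Finset.mul_sum]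
      ring
    simp only [hsplit]
    rw [Finset.sum_add_distrib, ← Finset.mul_sum]
    have hbd : -((k:ℝ)^s) ≤ ∑ r ∈ Finset.range (s+1), (-1:ℝ)^r * ∑ d ∈ D r, (A d - (Q:ℝ) * (1/d)) := by
      have h1 : ∀ r ∈ Finset.range (s+1),
          -(if r = 0 then 0 else ((D r).card : ℝ)) ≤ (-1:ℝ)^r * ∑ d ∈ D r, (A d - (Q:ℝ) * (1/d)) := by
        intro r hr
        have h2 := herr r hr
        have h3 : |(-1:ℝ)^r * ∑ d ∈ D r, (A d - (Q:ℝ) * (1/d))| = |∑ d ∈ D r, (A d - (Q:ℝ) * (1/d))| := by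
          rw [abs_mul, abs_pow, abs_neg, abs_one, one_pow, one_mul]
        have := neg_abs_le ((-1:ℝ)^r * ∑ d ∈ D r, (A d - (Q:ℝ) * (1/d)))
        rw [h3] at this
        linarith
      have hBsum : ∑ r ∈ Finset.range (s+1), (if r = 0 then 0 else ((D r).card : ℝ))
          ≤ (k:ℝ)^s := by
        simp only [hcardD]
        rw [Finset.sum_range_succ']
        simp only [Nat.succ_ne_zero, if_neg, if_pos, add_zero, ite_false, ite_true, reduceIte]
        have he : ∑ r ∈ Finset.Icc 1 s, (Nat.choose k r : ℝ)
            = ∑ i ∈ Finset.range s, (Nat.choose k (i+1) : ℝ) := by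
          rw [← Finset.Ico_add_one_right_eq_Icc, Finset.sum_Ico_eq_sum_range]
          simp only [Nat.add_sub_cancel]
          exact Finset.sum_congr rfl (fun i _ => by rw [add_comm])
        rw [← he]
        exact_mod_cast choose_sum_le k s hs1
      calc -((k:ℝ)^s) ≤ -(∑ r ∈ Finset.range (s+1), (if r = 0 then 0 else ((D r).card : ℝ))) :=
            neg_le_neg hBsum
          _ = ∑ r ∈ Finset.range (s+1), -(if r = 0 then 0 else ((D r).card : ℝ)) := by
            rw [Finset.sum_neg_distrib]
          _ ≤ ∑ r ∈ Finset.range (s+1), (-1:ℝ)^r * ∑ d ∈ D r, (A d - (Q:ℝ) * (1/d)) :=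
            Finset.sum_le_sum h1
    linarith
  -- step 3
  have hDempty : ∀ r, k < r → D r = ∅ := by
    intro r hr
    rw [hD, Finset.filter_eq_empty_iff]
    intro d hd
    rw [Nat.mem_divisors] at hd
    have := Finset.card_le_card (Nat.primeFactors_mono hd.1 hn0)
    omega
  have hfzero : ∀ r, k < r → f r = 0 := by
    intro r hr
    rw [hf]
    simp [hDempty r hr]
  have step3 : ∑ r ∈ Finset.range (s+1), f r = P - T' := by
    have hPf : P = ∑ r ∈ Finset.range (k+1), f r := by
      rw [hP, prod_one_sub_eq hn, hk]
    have hTf : T' = ∑ r ∈ Finset.Icc (s+1) k, f r := hT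
    rcases le_or_gt (s+1) (k+1) with hsk | hsk
    · have hIcc : Finset.Icc (s+1) k = Finset.Ico (s+1) (k+1) := by
        rw [Finset.Ico_add_one_right_eq_Icc]
      rw [hPf, hTf, hIcc]
      rw [Finset.range_eq_Ico, Finset.range_eq_Ico, ← Finset.sum_Ico_consecutive _ (by omega : 0 ≤ s+1) hsk]
      ring
    · have hT0 : T' = 0 := by
        rw [hTf, Finset.Icc_eq_empty (by omega), Finset.sum_empty]
      rw [hT0, sub_zero, hPf]
      rw [Finset.range_eq_Ico, Finset.range_eq_Ico,
        ← Finset.sum_Ico_consecutive _ (by omega : 0 ≤ k+1) (by omega : k+1 ≤ s+1)]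
      have : ∑ r ∈ Finset.Ico (k+1) (s+1), f r = 0 :=
        Finset.sum_eq_zero (fun r hr => hfzero r (by rw [Finset.mem_Ico] at hr; omega))
      rw [this, add_zero]
  -- conclusion
  rw [step3] at step2
  have hchoose : ∑ r ∈ Finset.Icc 1 s, (Nat.choose k r : ℝ) ≤ (k:ℝ)^s := by
    exact_mod_cast choose_sum_le k s hs1
  linarith [step1, step2, hQbig]
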